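/- Let a, x₁, y₁, x₂, y₂ be points in ℝ² (or any Euclidean space) with x₁ ≠ y₁, x₂ ≠ y₂, and a distinct from all of them. Suppose ‖a − x₁‖, ‖a − y₁‖, ‖a − x₂‖, ‖a − y₂‖ ≥ D and ‖x₁ − y₁‖, ‖x₁ − x₂‖, ‖x₁ − y₂‖ ≤ d with d ≤ δ·D, δ ≤ 1/4. Then |cos ∠(a; x₁, y₁) − (‖a−x₁‖ − ‖a−y₁‖)/‖x₁ − y₁‖| ≤ C·δ for a universal constant C, where ∠(a; x₁, y₁) denotes the angle at vertex x₁ of the triangle (a, x₁, y₁). -/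

import Mathlib

open InnerProductGeometry

set_option maxHeartbeats 1000000 in
theorem stmt10 : ∃ C : ℝ, 0 < C ∧ ∀ (n : ℕ)
    (a x₁ y₁ x₂ y₂ : EuclideanSpace ℝ (Fin n)) (D d δ : ℝ),
    x₁ ≠ y₁ → x₂ ≠ y₂ → a ≠ x₁ → a ≠ y₁ → a ≠ x₂ → a ≠ y₂ →
    0 < D → 0 < δ → δ ≤ 1/4 → d ≤ δ * D →
    D ≤ ‖a - x₁‖ → D ≤ ‖a - y₁‖ → D ≤ ‖a - x₂‖ → D ≤ ‖a - y₂‖ →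
    ‖x₁ - y₁‖ ≤ d → ‖x₁ - x₂‖ ≤ d → ‖x₁ - y₂‖ ≤ d →
    |Real.cos (angle (a - x₁) (y₁ - x₁)) - (‖a - x₁‖ - ‖a - y₁‖) / ‖x₁ - y₁‖|
      ≤ C * δ := by
  refine ⟨2, by norm_num, ?_⟩
  intro n a x₁ y₁ x₂ y₂ D d δ hxy _ _ _ _ _ hD hδ hδ4 hdδ ha1 ha2 _ _ hvd _ _
  set u := a - x₁ with hu
  set v := y₁ - x₁ with hv
  have huv : a - y₁ = u - v := by rw [hu, hv]; abel
  have hnv : ‖x₁ - y₁‖ = ‖v‖ := by rw [hv, norm_sub_rev]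
  rw [huv] at ha2
  rw [hnv] at hvd
  have hw : 0 < ‖v‖ := by
    rw [norm_pos_iff, hv, sub_ne_zero]
    exact fun h => hxy h.symm
  have hs : 0 < ‖u‖ := lt_of_lt_of_le hD ha1
  have ht : 0 < ‖u - v‖ := lt_of_lt_of_le hD ha2
  rw [cos_angle, huv, hnv]
  set s := ‖u‖
  set t := ‖u - v‖
  set w := ‖v‖
  set p := (inner ℝ u v : ℝ) with hp
  have hsq : t ^ 2 = s ^ 2 - 2 * p + w ^ 2 := norm_sub_sq_real u v
  have hst : 0 < s + t := by linarith
  have key : p / (s * w) - (s - t) / w = (p * (t - s) + s * w ^ 2) / (s * (s + t) * w) := by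
    have h1 : s - t = (2 * p - w ^ 2) / (s + t) := by
      rw [eq_div_iff (ne_of_gt hst)]; nlinarith
    rw [h1]
    field_simp
    ring
  rw [key]
  have hpb : |p| ≤ s * w := abs_real_inner_le_norm u v
  have hts : |t - s| ≤ w := by
    have := abs_norm_sub_norm_le (u - v) u
    simpa using this
  have hnum : |p * (t - s) + s * w ^ 2| ≤ 2 * s * w ^ 2 := by
    calc |p * (t - s) + s * w ^ 2| ≤ |p * (t - s)| + |s * w ^ 2| := abs_add_le _ _
      _ = |p| * |t - s| + s * w ^ 2 := by
          rw [abs_mul, abs_of_nonneg (by positivity : (0:ℝ) ≤ s * w ^ 2)]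
      _ ≤ (s * w) * w + s * w ^ 2 := by
          have h1 : |p| * |t - s| ≤ (s * w) * w :=
            mul_le_mul hpb hts (abs_nonneg _) (by positivity)
          linarith
      _ = 2 * s * w ^ 2 := by ring
  have hden : 0 < s * (s + t) * w := by positivity
  rw [abs_div, abs_of_pos hden, div_le_iff₀ hden]
  have hwδ : w ≤ δ * s := by
    calc w ≤ d := hvd
      _ ≤ δ * D := hdδ
      _ ≤ δ * s := mul_le_mul_of_nonneg_left ha1 hδ.le
  calc |p * (t - s) + s * w ^ 2| ≤ 2 * s * w ^ 2 := hnum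
    _ = 2 * (s * w) * w := by ring
    _ ≤ 2 * (s * w) * (δ * s) := by
        have : (0:ℝ) ≤ 2 * (s * w) := by positivity
        exact mul_le_mul_of_nonneg_left (hwδ) this
    _ = 2 * δ * (s * s * w) := by ring
    _ ≤ 2 * δ * (s * (s + t) * w) := by nlinarith [mul_pos (mul_pos hs ht) hw]
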